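/- Bi-density bound for Erdős–Rényi graphs: let ε > 0 and c ≥ 24·2.1·max{1, (1+ε)/ε²}. Then for every n ≥ 2, the probability that the random graph G ~ G(n, 1/2) contains vertex sets S, T ⊆ [n] with |S| ≥ c·log n, |T| ≥ c·log n, and bi-density_G(S, T) > (1+ε)/2 is at most 2/n³. -/

import Mathlib

open Finset

theorem count_mem_powersetCard {α : Type*} [DecidableEq α] (S : Finset α) (u : α) (hu : u ∈ S)
    (m : ℕ) (hm : 1 ≤ m) :
    ((S.powersetCard m).filter (fun A => u ∈ A)).card = (S.card - 1).choose (m - 1) := by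
  rw [← Finset.card_erase_of_mem hu, ← Finset.card_powersetCard]
  refine Finset.card_bij' (fun A _ => A.erase u) (fun B _ => insert u B) ?_ ?_ ?_ ?_
  · intro A hA
    simp only [mem_filter, mem_powersetCard] at hA
    simp only [mem_powersetCard]
    exact ⟨fun x hx => Finset.mem_erase.mpr ⟨(Finset.mem_erase.mp hx).1,
      hA.1.1 (Finset.mem_erase.mp hx).2⟩,
      by rw [Finset.card_erase_of_mem hA.2, hA.1.2]⟩
  · intro B hB
    simp only [mem_powersetCard] at hB
    have hu' : u ∉ B := fun h => (Finset.mem_erase.mp (hB.1 h)).1 rfl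
    simp only [mem_filter, mem_powersetCard]
    refine ⟨⟨?_, ?_⟩, Finset.mem_insert_self _ _⟩
    · intro x hx
      rcases Finset.mem_insert.mp hx with rfl | h
      · exact hu
      · exact (Finset.erase_subset _ _) (hB.1 h)
    · rw [Finset.card_insert_of_notMem hu', hB.2, Nat.sub_add_cancel hm]
  · intro A hA
    simp only [mem_filter] at hA
    exact Finset.insert_erase hA.2
  · intro B hB
    simp only [mem_powersetCard] at hB
    have hu' : u ∉ B := fun h => (Finset.mem_erase.mp (hB.1 h)).1 rfl
    exact Finset.erase_insert hu'

theorem averaging {α : Type*} [DecidableEq α] (S T : Finset α) (P : α × α → Prop)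
    [DecidablePred P] (m : ℕ) (hm : 1 ≤ m) :
    ∑ S' ∈ S.powersetCard m, ∑ T' ∈ T.powersetCard m, ((S' ×ˢ T').filter P).card
      = ((S ×ˢ T).filter P).card * ((S.card - 1).choose (m - 1) * (T.card - 1).choose (m - 1)) := by
  have key : ∀ S' ∈ S.powersetCard m, ∀ T' ∈ T.powersetCard m,
      ((S' ×ˢ T').filter P).card
        = ∑ p ∈ (S ×ˢ T).filter P, (if p.1 ∈ S' then 1 else 0) * (if p.2 ∈ T' then 1 else 0) := by
    intro S' hS' T' hT'
    rw [Finset.mem_powersetCard] at hS' hT'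
    have : (S' ×ˢ T').filter P = ((S ×ˢ T).filter P).filter (fun p => p.1 ∈ S' ∧ p.2 ∈ T') := by
      ext p
      simp only [mem_filter, mem_product]
      constructor
      · rintro ⟨⟨h1, h2⟩, h3⟩
        exact ⟨⟨⟨hS'.1 h1, hT'.1 h2⟩, h3⟩, h1, h2⟩
      · rintro ⟨⟨_, h3⟩, h1, h2⟩
        exact ⟨⟨h1, h2⟩, h3⟩
    rw [this, Finset.card_filter]
    exact Finset.sum_congr rfl (fun p _ => by by_cases h1 : p.1 ∈ S' <;> by_cases h2 : p.2 ∈ T' <;>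
      simp [h1, h2])
  rw [Finset.sum_congr rfl (fun S' hS' => Finset.sum_congr rfl (fun T' hT' => key S' hS' T' hT'))]
  have cT : ∀ p ∈ (S ×ˢ T).filter P,
      ∑ T' ∈ T.powersetCard m, (if p.2 ∈ T' then 1 else 0) = (T.card - 1).choose (m - 1) := by
    intro p hp
    rw [← Finset.card_filter]
    exact count_mem_powersetCard T p.2 (Finset.mem_product.mp (Finset.mem_filter.mp hp).1).2 m hm
  have cS : ∀ p ∈ (S ×ˢ T).filter P,
      ∑ S' ∈ S.powersetCard m, (if p.1 ∈ S' then 1 else 0) = (S.card - 1).choose (m - 1) := by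
    intro p hp
    rw [← Finset.card_filter]
    exact count_mem_powersetCard S p.1 (Finset.mem_product.mp (Finset.mem_filter.mp hp).1).1 m hm
  calc ∑ S' ∈ S.powersetCard m, ∑ T' ∈ T.powersetCard m, ∑ p ∈ (S ×ˢ T).filter P,
        (if p.1 ∈ S' then 1 else 0) * (if p.2 ∈ T' then 1 else 0)
      = ∑ S' ∈ S.powersetCard m, ∑ p ∈ (S ×ˢ T).filter P,
        (if p.1 ∈ S' then 1 else 0) * ∑ T' ∈ T.powersetCard m, (if p.2 ∈ T' then 1 else 0) := by
        refine Finset.sum_congr rfl (fun S' _ => ?_)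
        rw [Finset.sum_comm]
        exact Finset.sum_congr rfl (fun p _ => by rw [Finset.mul_sum])
    _ = ∑ S' ∈ S.powersetCard m, ∑ p ∈ (S ×ˢ T).filter P,
        (if p.1 ∈ S' then 1 else 0) * (T.card - 1).choose (m - 1) := by
        exact Finset.sum_congr rfl (fun S' _ => Finset.sum_congr rfl (fun p hp => by rw [cT p hp]))
    _ = ∑ p ∈ (S ×ˢ T).filter P,
        (∑ S' ∈ S.powersetCard m, (if p.1 ∈ S' then 1 else 0)) * (T.card - 1).choose (m - 1) := by
        rw [Finset.sum_comm]
        exact Finset.sum_congr rfl (fun p _ => by rw [Finset.sum_mul])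
    _ = ∑ p ∈ (S ×ˢ T).filter P, (S.card - 1).choose (m - 1) * (T.card - 1).choose (m - 1) := by
        exact Finset.sum_congr rfl (fun p hp => by rw [cS p hp])
    _ = ((S ×ˢ T).filter P).card * ((S.card - 1).choose (m - 1) * (T.card - 1).choose (m - 1)) := by
        rw [Finset.sum_const, smul_eq_mul]

theorem exists_dense_sub {α : Type*} [DecidableEq α] (S T : Finset α) (P : α × α → Prop)
    [DecidablePred P] (m : ℕ) (hm : 1 ≤ m) (hmS : m ≤ S.card) (hmT : m ≤ T.card) :
    ∃ S' T' : Finset α, S' ⊆ S ∧ S'.card = m ∧ T' ⊆ T ∧ T'.card = m ∧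
      ((S ×ˢ T).filter P).card * (m * m) ≤ ((S' ×ˢ T').filter P).card * (S.card * T.card) := by
  set N := ((S ×ˢ T).filter P).card with hN
  set cS := (S.card - 1).choose (m - 1)
  set cT := (T.card - 1).choose (m - 1)
  have hsum : ∑ q ∈ S.powersetCard m ×ˢ T.powersetCard m, ((q.1 ×ˢ q.2).filter P).card
      = N * (cS * cT) := by
    rw [Finset.sum_product]
    exact averaging S T P m hm
  have hne : (S.powersetCard m ×ˢ T.powersetCard m).Nonempty := by
    refine Finset.Nonempty.product ?_ ?_ <;> rw [Finset.powersetCard_nonempty] <;> assumption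
  have hcard : (S.powersetCard m ×ˢ T.powersetCard m).card = S.card.choose m * T.card.choose m := by
    rw [Finset.card_product, Finset.card_powersetCard, Finset.card_powersetCard]
  have heq : ∑ q ∈ S.powersetCard m ×ˢ T.powersetCard m, N * (cS * cT)
        = ∑ q ∈ S.powersetCard m ×ˢ T.powersetCard m,
          ((q.1 ×ˢ q.2).filter P).card * (S.card.choose m * T.card.choose m) := by
    rw [Finset.sum_const, smul_eq_mul, hcard, ← Finset.sum_mul, hsum]
    ring
  obtain ⟨q, hq, hle⟩ := Finset.exists_le_of_sum_le hne (le_of_eq heq)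
  obtain ⟨hq1, hq2⟩ := Finset.mem_product.mp hq
  rw [Finset.mem_powersetCard] at hq1 hq2
  refine ⟨q.1, q.2, hq1.1, hq1.2, hq2.1, hq2.2, ?_⟩
  -- from hle : N * (cS * cT) ≤ cnt * (choose * choose)
  have hchS : S.card * cS = S.card.choose m * m := by
    have h1 : S.card - 1 + 1 = S.card := Nat.succ_pred_eq_of_pos (le_trans hm hmS)
    have h2 : m - 1 + 1 = m := Nat.succ_pred_eq_of_pos hm
    have := Nat.add_one_mul_choose_eq (S.card - 1) (m - 1)
    simp only [Nat.succ_eq_add_one, h1, h2] at this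
    exact this
  have hchT : T.card * cT = T.card.choose m * m := by
    have h1 : T.card - 1 + 1 = T.card := Nat.succ_pred_eq_of_pos (le_trans hm hmT)
    have h2 : m - 1 + 1 = m := Nat.succ_pred_eq_of_pos hm
    have := Nat.add_one_mul_choose_eq (T.card - 1) (m - 1)
    simp only [Nat.succ_eq_add_one, h1, h2] at this
    exact this
  have hCpos : 0 < S.card.choose m * T.card.choose m :=
    Nat.mul_pos (Nat.choose_pos hmS) (Nat.choose_pos hmT)
  have key : N * (m * m) * (S.card.choose m * T.card.choose m)
      ≤ ((q.1 ×ˢ q.2).filter P).card * (S.card * T.card) * (S.card.choose m * T.card.choose m) := by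
    calc N * (m * m) * (S.card.choose m * T.card.choose m)
        = N * ((S.card.choose m * m) * (T.card.choose m * m)) := by ring
      _ = N * ((S.card * cS) * (T.card * cT)) := by rw [hchS, hchT]
      _ = N * (cS * cT) * (S.card * T.card) := by ring
      _ ≤ ((q.1 ×ˢ q.2).filter P).card * (S.card.choose m * T.card.choose m) * (S.card * T.card) := by
          exact Nat.mul_le_mul_right _ hle
      _ = ((q.1 ×ˢ q.2).filter P).card * (S.card * T.card) * (S.card.choose m * T.card.choose m) := by
          ring
  exact Nat.le_of_mul_le_mul_right key hCpos

theorem one_add_exp_le (t : ℝ) : 1 + Real.exp t ≤ 2 * Real.exp (t / 2 + t ^ 2 / 8) := by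
  have h1 : 1 + Real.exp t = 2 * Real.exp (t / 2) * Real.cosh (t / 2) := by
    have e1 : Real.exp (t / 2) * Real.exp (t / 2) = Real.exp t := by
      rw [← Real.exp_add]; ring_nf
    have e2 : Real.exp (t / 2) * Real.exp (-(t / 2)) = 1 := by
      rw [← Real.exp_add]; simp
    rw [Real.cosh_eq]
    linear_combination (-1 : ℝ) * e1 + (-1 : ℝ) * e2
  have h2 : Real.cosh (t / 2) ≤ Real.exp ((t / 2) ^ 2 / 2) := Real.cosh_le_exp_half_sq _
  rw [h1, Real.exp_add]
  have h3 : ((t / 2) ^ 2 / 2) = t ^ 2 / 8 := by ring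
  rw [← h3]
  have := Real.exp_pos (t / 2)
  nlinarith [Real.exp_pos ((t/2)^2/2)]

theorem chernoff_count {ι : Type*} [Fintype ι] [DecidableEq ι] (w : ι → ℕ) (hw : ∀ i, w i ≤ 2)
    (ε a : ℝ) (hε : 0 < ε) (W : ℕ) (hW : ∑ i, w i ≤ W) :
    ((univ.filter (fun ω : ι → Bool =>
        a < ∑ i, (w i : ℝ) * (if ω i then 1 else 0))).card : ℝ)
      ≤ (2 : ℝ) ^ (Fintype.card ι) * Real.exp (-(ε * a) + (ε / 2 + ε ^ 2 / 4) * W) := by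
  set X : (ι → Bool) → ℝ := fun ω => ∑ i, (w i : ℝ) * (if ω i then 1 else 0) with hX
  have step1 : ((univ.filter (fun ω : ι → Bool => a < X ω)).card : ℝ)
      ≤ ∑ ω : ι → Bool, Real.exp (ε * (X ω - a)) := by
    rw [Finset.card_filter]
    push_cast
    rw [← Finset.sum_filter]
    calc (∑ ω ∈ univ.filter (fun ω : ι → Bool => a < X ω), (1:ℝ))
        ≤ ∑ ω ∈ univ.filter (fun ω : ι → Bool => a < X ω), Real.exp (ε * (X ω - a)) := by
          refine Finset.sum_le_sum (fun ω hω => ?_)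
          rw [Finset.mem_filter] at hω
          have : 0 ≤ ε * (X ω - a) := by nlinarith [hω.2]
          calc (1:ℝ) = Real.exp 0 := Real.exp_zero.symm
            _ ≤ Real.exp _ := Real.exp_le_exp.mpr this
      _ ≤ ∑ ω : ι → Bool, Real.exp (ε * (X ω - a)) :=
          Finset.sum_le_sum_of_subset_of_nonneg (Finset.filter_subset _ _)
            (fun ω _ _ => (Real.exp_pos _).le)
  have step2 : ∑ ω : ι → Bool, Real.exp (ε * (X ω - a))
      = Real.exp (-(ε * a)) * ∏ i, (1 + Real.exp (ε * w i)) := by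
    have : ∀ ω : ι → Bool, Real.exp (ε * (X ω - a))
        = Real.exp (-(ε * a)) * ∏ i, Real.exp (ε * (w i : ℝ) * (if ω i then 1 else 0)) := by
      intro ω
      rw [← Real.exp_sum, ← Real.exp_add]
      congr 1
      simp only [hX, mul_sub, Finset.mul_sum, mul_assoc]
      ring
    rw [Finset.sum_congr rfl (fun ω _ => this ω), ← Finset.mul_sum]
    congr 1
    have := Finset.prod_univ_sum (fun _ : ι => (univ : Finset Bool))
      (fun i (b : Bool) => Real.exp (ε * (w i : ℝ) * (if b then 1 else 0)))
    rw [Fintype.piFinset_univ] at this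
    rw [← this]
    refine Finset.prod_congr rfl (fun i _ => ?_)
    rw [show (univ : Finset Bool) = {true, false} by rfl]
    rw [Finset.sum_insert (by simp), Finset.sum_singleton]
    simp [add_comm]
  have step3 : ∏ i, (1 + Real.exp (ε * w i))
      ≤ (2:ℝ) ^ (Fintype.card ι) * Real.exp ((ε / 2 + ε ^ 2 / 4) * W) := by
    have hfac : ∀ i : ι, 1 + Real.exp (ε * w i)
        ≤ 2 * Real.exp ((ε / 2 + ε ^ 2 / 4) * (w i : ℝ)) := by
      intro i
      refine le_trans (one_add_exp_le (ε * w i)) ?_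
      have h2 : (ε * w i) / 2 + (ε * w i) ^ 2 / 8 ≤ (ε / 2 + ε ^ 2 / 4) * (w i : ℝ) := by
        have hwi : (w i : ℝ) ≤ 2 := by exact_mod_cast hw i
        have hwi0 : (0:ℝ) ≤ w i := Nat.cast_nonneg _
        have key : (w i : ℝ) ^ 2 ≤ 2 * (w i : ℝ) := by nlinarith
        nlinarith [mul_le_mul_of_nonneg_left key (sq_nonneg ε)]
      have := Real.exp_le_exp.mpr h2
      linarith [Real.exp_pos ((ε * w i) / 2 + (ε * w i) ^ 2 / 8)]
    calc ∏ i, (1 + Real.exp (ε * w i))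
        ≤ ∏ i, 2 * Real.exp ((ε / 2 + ε ^ 2 / 4) * (w i : ℝ)) := by
          refine Finset.prod_le_prod (fun i _ => by positivity) (fun i _ => hfac i)
      _ = (2:ℝ) ^ (Fintype.card ι) * Real.exp ((ε / 2 + ε ^ 2 / 4) * (∑ i, (w i : ℝ))) := by
          rw [Finset.prod_mul_distrib, Finset.prod_const, ← Real.exp_sum, ← Finset.mul_sum]
          simp [Finset.card_univ]
      _ ≤ (2:ℝ) ^ (Fintype.card ι) * Real.exp ((ε / 2 + ε ^ 2 / 4) * W) := by
          have hsw : (∑ i, (w i : ℝ)) ≤ (W : ℝ) := by exact_mod_cast hW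
          have hc : 0 ≤ ε / 2 + ε ^ 2 / 4 := by positivity
          have := Real.exp_le_exp.mpr (mul_le_mul_of_nonneg_left hsw hc)
          have h2 : (0:ℝ) < 2 ^ (Fintype.card ι) := by positivity
          nlinarith
  calc ((univ.filter (fun ω : ι → Bool => a < X ω)).card : ℝ)
      ≤ ∑ ω : ι → Bool, Real.exp (ε * (X ω - a)) := step1
    _ = Real.exp (-(ε * a)) * ∏ i, (1 + Real.exp (ε * w i)) := step2
    _ ≤ Real.exp (-(ε * a)) * ((2:ℝ) ^ (Fintype.card ι) * Real.exp ((ε / 2 + ε ^ 2 / 4) * W)) := by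
        exact mul_le_mul_of_nonneg_left step3 (Real.exp_pos _).le
    _ = (2 : ℝ) ^ (Fintype.card ι) * Real.exp (-(ε * a) + (ε / 2 + ε ^ 2 / 4) * W) := by
        rw [Real.exp_add]; ring

variable {n : ℕ}

noncomputable def wgt (S T : Finset (Fin n)) (e : Sym2 (Fin n)) : ℕ :=
  ((S ×ˢ T).filter (fun p => p.1 ≠ p.2 ∧ s(p.1, p.2) = e)).card

theorem wgt_le_two (S T : Finset (Fin n)) (e : Sym2 (Fin n)) : wgt S T e ≤ 2 := by
  induction e using Sym2.ind with
  | _ a b =>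
    unfold wgt
    refine le_trans (Finset.card_le_card (t := ({(a, b), (b, a)} : Finset (Fin n × Fin n)))
      (fun p hp => ?_)) ?_
    · rw [Finset.mem_filter] at hp
      obtain ⟨_, hne, he⟩ := hp
      rw [Sym2.eq_iff] at he
      show p ∈ ({(a, b), (b, a)} : Finset (Fin n × Fin n))
      rcases he with ⟨h1, h2⟩ | ⟨h1, h2⟩
      · simp [Prod.ext_iff, h1, h2]
      · simp [Prod.ext_iff, h1, h2]
    · exact le_trans (Finset.card_insert_le _ _) (by simp)

theorem sum_wgt_le (S T : Finset (Fin n)) : ∑ e : Sym2 (Fin n), wgt S T e ≤ S.card * T.card := by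
  classical
  have := Finset.card_eq_sum_card_fiberwise
    (f := fun p : Fin n × Fin n => s(p.1, p.2)) (t := (univ : Finset (Sym2 (Fin n))))
    (s := (S ×ˢ T).filter (fun p => p.1 ≠ p.2)) (fun x _ => Finset.mem_univ _)
  have heq : ∀ e : Sym2 (Fin n),
      (((S ×ˢ T).filter (fun p => p.1 ≠ p.2)).filter (fun p => s(p.1, p.2) = e)).card
        = wgt S T e := by
    intro e
    unfold wgt
    congr 1
    rw [Finset.filter_filter]
  calc ∑ e : Sym2 (Fin n), wgt S T e
      = ((S ×ˢ T).filter (fun p => p.1 ≠ p.2)).card := by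
        rw [this]
        exact Finset.sum_congr rfl (fun e _ => (heq e).symm)
    _ ≤ (S ×ˢ T).card := Finset.card_le_card (Finset.filter_subset _ _)
    _ = S.card * T.card := Finset.card_product _ _

theorem count_eq_sum_wgt (S T : Finset (Fin n)) (ω : Sym2 (Fin n) → Bool) :
    ((S ×ˢ T).filter (fun p => p.1 ≠ p.2 ∧ ω s(p.1, p.2) = true)).card
      = ∑ e : Sym2 (Fin n), wgt S T e * (if ω e then 1 else 0) := by
  classical
  rw [Finset.card_eq_sum_card_fiberwise
    (f := fun p : Fin n × Fin n => s(p.1, p.2)) (t := (univ : Finset (Sym2 (Fin n))))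
    (fun x _ => Finset.mem_univ _)]
  refine Finset.sum_congr rfl (fun e _ => ?_)
  by_cases hωe : ω e = true
  · have : ((S ×ˢ T).filter (fun p => p.1 ≠ p.2 ∧ ω s(p.1, p.2) = true)).filter
        (fun p => s(p.1, p.2) = e)
        = (S ×ˢ T).filter (fun p => p.1 ≠ p.2 ∧ s(p.1, p.2) = e) := by
      ext p
      simp only [Finset.mem_filter]
      constructor
      · rintro ⟨⟨h1, h2, _⟩, h4⟩
        exact ⟨h1, h2, h4⟩
      · rintro ⟨h1, h2, h4⟩
        exact ⟨⟨h1, h2, by rw [h4]; exact hωe⟩, h4⟩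
    rw [this, hωe, if_pos rfl, mul_one]
    rfl
  · have : ((S ×ˢ T).filter (fun p => p.1 ≠ p.2 ∧ ω s(p.1, p.2) = true)).filter
        (fun p => s(p.1, p.2) = e) = ∅ := by
      ext p
      simp only [Finset.mem_filter, Finset.notMem_empty, iff_false]
      rintro ⟨⟨_, _, h3⟩, h4⟩
      rw [h4] at h3
      exact hωe h3
    rw [this, if_neg hωe, mul_zero, Finset.card_empty]

theorem numeric_bound (L m ε cst : ℝ) (hL : 0 < L) (hm1 : 1 ≤ m) (hmc : cst * L ≤ m)
    (hc2 : 50.4 * (1 + ε) ≤ ε ^ 2 * cst) (hε : 0 < ε) :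
    2 * m * L - ε ^ 2 * m ^ 2 / 4 ≤ -(3 * L) := by
  have hm0 : 0 ≤ m := le_trans zero_le_one hm1
  have h1 : 50.4 * (1 + ε) * L ≤ ε ^ 2 * m := by
    calc 50.4 * (1 + ε) * L ≤ (ε ^ 2 * cst) * L := by nlinarith
      _ = ε ^ 2 * (cst * L) := by ring
      _ ≤ ε ^ 2 * m := by nlinarith [sq_nonneg ε]
  have h2 : 50.4 * (1 + ε) * L * m ≤ ε ^ 2 * m * m := mul_le_mul_of_nonneg_right h1 hm0
  have h3 : L * 1 ≤ L * m := mul_le_mul_of_nonneg_left hm1 hL.le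
  have h4 : 0 ≤ ε * (L * m) := mul_nonneg hε.le (mul_nonneg hL.le hm0)
  nlinarith [h2, h3, h4]

set_option maxHeartbeats 2000000 in
/-- Bi-density bound for Erdős–Rényi graphs `G(n, 1/2)`: for `ε > 0` and
`c ≥ 24·2.1·max{1, (1+ε)/ε²}`, the probability (over a uniformly random
symmetric edge-indicator `ω`, i.e. each potential edge present independently
with probability `1/2`) that there are vertex sets `S, T` with
`|S|, |T| ≥ c·log n` and `bi-density(S,T) > (1+ε)/2` is at most `2/n³`. -/
theorem bidensity_bound (n : ℕ) (hn : 2 ≤ n) (ε cst : ℝ) (hε : 0 < ε)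
    (hcst : 24 * 2.1 * max 1 ((1 + ε) / ε ^ 2) ≤ cst) :
    (Nat.card {ω : Sym2 (Fin n) → Bool //
        ∃ S T : Finset (Fin n),
          cst * Real.log n ≤ (S.card : ℝ) ∧ cst * Real.log n ≤ (T.card : ℝ) ∧
          (1 + ε) / 2 <
            (Nat.card {p : Fin n × Fin n //
                p.1 ∈ S ∧ p.2 ∈ T ∧ p.1 ≠ p.2 ∧ ω s(p.1, p.2) = true} : ℝ) /
              ((S.card : ℝ) * (T.card : ℝ))} : ℝ) /
      (Nat.card (Sym2 (Fin n) → Bool) : ℝ) ≤ 2 / (n : ℝ) ^ 3 := by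
  classical
  set L := Real.log n with hLdef
  have hn1 : (1 : ℝ) < n := by exact_mod_cast hn
  have hn0 : (0 : ℝ) < n := by linarith
  have hL : 0 < L := Real.log_pos hn1
  -- constants
  have hc1 : (50.4 : ℝ) ≤ cst := by
    refine le_trans ?_ hcst
    have : (1:ℝ) ≤ max 1 ((1 + ε) / ε ^ 2) := le_max_left _ _
    nlinarith
  have hc2 : 50.4 * (1 + ε) ≤ ε ^ 2 * cst := by
    have h1 : (1 + ε) / ε ^ 2 ≤ max 1 ((1 + ε) / ε ^ 2) := le_max_right _ _
    have hε2 : (0:ℝ) < ε ^ 2 := by positivity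
    have h2 : 24 * 2.1 * ((1 + ε) / ε ^ 2) ≤ cst := by
      refine le_trans ?_ hcst
      nlinarith
    have key : ε ^ 2 * (24 * 2.1 * ((1 + ε) / ε ^ 2)) = 50.4 * (1 + ε) := by
      have h : ε ^ 2 ≠ 0 := by positivity
      norm_num
      field_simp
    calc 50.4 * (1 + ε) = ε ^ 2 * (24 * 2.1 * ((1 + ε) / ε ^ 2)) := key.symm
      _ ≤ ε ^ 2 * cst := by nlinarith
  have hcst0 : 0 < cst := lt_of_lt_of_le (by norm_num) hc1
  set m := Nat.ceil (cst * L) with hmdef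
  have hm_real : cst * L ≤ (m : ℝ) := Nat.le_ceil _
  have hm1 : 1 ≤ m := Nat.one_le_iff_ne_zero.mpr (by
    intro h0
    have := Nat.ceil_eq_zero.mp (hmdef ▸ h0)
    nlinarith [mul_pos hcst0 hL])
  have hm1R : (1 : ℝ) ≤ m := by exact_mod_cast hm1
  set M := Fintype.card (Sym2 (Fin n)) with hMdef
  set B : (Sym2 (Fin n) → Bool) → Prop := fun ω =>
    ∃ S T : Finset (Fin n),
      cst * Real.log n ≤ (S.card : ℝ) ∧ cst * Real.log n ≤ (T.card : ℝ) ∧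
      (1 + ε) / 2 <
        (Nat.card {p : Fin n × Fin n //
            p.1 ∈ S ∧ p.2 ∈ T ∧ p.1 ≠ p.2 ∧ ω s(p.1, p.2) = true} : ℝ) /
          ((S.card : ℝ) * (T.card : ℝ)) with hBdef
  have hden : (Nat.card (Sym2 (Fin n) → Bool)) = 2 ^ M := by
    rw [Nat.card_eq_fintype_card, Fintype.card_fun, Fintype.card_bool]
  have hnum : (Nat.card {ω : Sym2 (Fin n) → Bool // B ω}) = (univ.filter B).card := by
    rw [Nat.card_eq_fintype_card, Fintype.card_subtype]
  set a : ℝ := (1 + ε) / 2 * (m : ℝ) ^ 2 with hadef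
  set Ev : Finset (Fin n) × Finset (Fin n) → Finset (Sym2 (Fin n) → Bool) := fun q =>
    univ.filter (fun ω : Sym2 (Fin n) → Bool =>
      a < (((q.1 ×ˢ q.2).filter (fun p => p.1 ≠ p.2 ∧ ω s(p.1, p.2) = true)).card : ℝ)) with hEvdef
  set I : Finset (Finset (Fin n) × Finset (Fin n)) :=
    (univ.powersetCard m) ×ˢ (univ.powersetCard m) with hIdef
  -- inclusion
  have hincl : univ.filter B ⊆ I.biUnion Ev := by
    intro ω hω
    rw [Finset.mem_filter] at hω
    obtain ⟨_, S, T, hS, hT, hdens⟩ := hω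
    set P : Fin n × Fin n → Prop := fun p => p.1 ≠ p.2 ∧ ω s(p.1, p.2) = true with hPdef
    have hconv : (Nat.card {p : Fin n × Fin n //
        p.1 ∈ S ∧ p.2 ∈ T ∧ p.1 ≠ p.2 ∧ ω s(p.1, p.2) = true})
        = ((S ×ˢ T).filter P).card := by
      rw [Nat.card_eq_fintype_card, Fintype.card_subtype]
      congr 1
      ext p
      simp only [Finset.mem_filter, Finset.mem_univ, true_and, Finset.mem_product, hPdef,
        and_assoc]
    rw [hconv] at hdens
    have hmS : m ≤ S.card := Nat.ceil_le.mpr hS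
    have hmT : m ≤ T.card := Nat.ceil_le.mpr hT
    obtain ⟨S', T', hS'sub, hS'card, hT'sub, hT'card, hkey⟩ :=
      exists_dense_sub S T P m hm1 hmS hmT
    have hstpos : (0 : ℝ) < (S.card : ℝ) * (T.card : ℝ) := by
      have h1 : 0 < S.card := lt_of_lt_of_le hm1 hmS
      have h2 : 0 < T.card := lt_of_lt_of_le hm1 hmT
      positivity
    rw [lt_div_iff₀ hstpos] at hdens
    have hkeyR : (((S ×ˢ T).filter P).card : ℝ) * ((m : ℝ) * m)
        ≤ (((S' ×ˢ T').filter P).card : ℝ) * ((S.card : ℝ) * T.card) := by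
      exact_mod_cast hkey
    have hfinal : a < (((S' ×ˢ T').filter P).card : ℝ) := by
      rw [← mul_lt_mul_iff_of_pos_right hstpos]
      calc a * ((S.card : ℝ) * T.card)
          = ((1 + ε) / 2 * ((S.card : ℝ) * T.card)) * ((m : ℝ) * m) := by
            rw [hadef]; ring
        _ < (((S ×ˢ T).filter P).card : ℝ) * ((m : ℝ) * m) := by
            have hmm : (0:ℝ) < (m : ℝ) * m := by nlinarith
            exact mul_lt_mul_of_pos_right hdens hmm
        _ ≤ (((S' ×ˢ T').filter P).card : ℝ) * ((S.card : ℝ) * T.card) := hkeyR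
    refine Finset.mem_biUnion.mpr ⟨(S', T'), ?_, ?_⟩
    · rw [hIdef, Finset.mem_product]
      constructor <;> rw [Finset.mem_powersetCard] <;>
        exact ⟨Finset.subset_univ _, by assumption⟩
    · rw [hEvdef, Finset.mem_filter]
      exact ⟨Finset.mem_univ _, hfinal⟩
  -- per-pair Chernoff bound
  have hper : ∀ q ∈ I, ((Ev q).card : ℝ)
      ≤ (2 : ℝ) ^ M * Real.exp (-(ε ^ 2 * (m : ℝ) ^ 2 / 4)) := by
    intro q hq
    rw [hIdef, Finset.mem_product, Finset.mem_powersetCard, Finset.mem_powersetCard] at hq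
    have hEveq : Ev q = univ.filter (fun ω : Sym2 (Fin n) → Bool =>
        a < ∑ e : Sym2 (Fin n), (wgt q.1 q.2 e : ℝ) * (if ω e then 1 else 0)) := by
      rw [hEvdef]
      refine Finset.filter_congr (fun ω _ => ?_)
      rw [count_eq_sum_wgt]
      push_cast
      rfl
    have hWsum : ∑ e : Sym2 (Fin n), wgt q.1 q.2 e ≤ m * m := by
      calc ∑ e : Sym2 (Fin n), wgt q.1 q.2 e ≤ q.1.card * q.2.card := sum_wgt_le _ _
        _ = m * m := by rw [hq.1.2, hq.2.2]
    have hch := chernoff_count (wgt q.1 q.2) (wgt_le_two q.1 q.2) ε a hε (m * m) hWsum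
    rw [hEveq]
    refine le_trans hch ?_
    have hexp : -(ε * a) + (ε / 2 + ε ^ 2 / 4) * ((m * m : ℕ) : ℝ)
        = -(ε ^ 2 * (m : ℝ) ^ 2 / 4) := by
      rw [hadef]; push_cast; ring
    rw [hexp]
  -- put it together
  rw [hden, hnum]
  rw [div_le_div_iff₀ (by positivity) (by positivity)]
  push_cast
  calc ((univ.filter B).card : ℝ) * (n : ℝ) ^ 3
      ≤ (((I.biUnion Ev).card : ℕ) : ℝ) * (n : ℝ) ^ 3 := by
        have := Finset.card_le_card hincl
        have h3 : (0:ℝ) < (n : ℝ) ^ 3 := by positivity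
        exact mul_le_mul_of_nonneg_right (by exact_mod_cast this) h3.le
    _ ≤ (∑ q ∈ I, ((Ev q).card : ℝ)) * (n : ℝ) ^ 3 := by
        have := Finset.card_biUnion_le (s := I) (t := Ev)
        have hcast : (((I.biUnion Ev).card : ℕ) : ℝ) ≤ ∑ q ∈ I, ((Ev q).card : ℝ) := by
          push_cast
          exact_mod_cast this
        exact mul_le_mul_of_nonneg_right hcast (by positivity)
    _ ≤ ((I.card : ℝ) * ((2 : ℝ) ^ M * Real.exp (-(ε ^ 2 * (m : ℝ) ^ 2 / 4)))) * (n : ℝ) ^ 3 := by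
        refine mul_le_mul_of_nonneg_right ?_ (by positivity)
        calc ∑ q ∈ I, ((Ev q).card : ℝ)
            ≤ ∑ q ∈ I, (2 : ℝ) ^ M * Real.exp (-(ε ^ 2 * (m : ℝ) ^ 2 / 4)) :=
              Finset.sum_le_sum hper
          _ = (I.card : ℝ) * ((2 : ℝ) ^ M * Real.exp (-(ε ^ 2 * (m : ℝ) ^ 2 / 4))) := by
              rw [Finset.sum_const, nsmul_eq_mul]
    _ ≤ 2 * (2 : ℝ) ^ M := by
        have hIcard : (I.card : ℝ) ≤ ((n : ℝ) ^ m) ^ 2 := by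
          rw [hIdef, Finset.card_product, Finset.card_powersetCard, Finset.card_univ,
            Fintype.card_fin]
          have h1 : (n.choose m : ℝ) ≤ (n : ℝ) ^ m := by
            exact_mod_cast Nat.choose_le_pow n m
          have h0 : (0:ℝ) ≤ (n.choose m : ℝ) := Nat.cast_nonneg _
          push_cast
          nlinarith
        have hpow : ((n : ℝ) ^ m) ^ 2 = Real.exp (2 * (m : ℝ) * L) := by
          conv_lhs => rw [← Real.exp_log hn0, ← hLdef]
          rw [← Real.exp_nat_mul, ← Real.exp_nat_mul]
          push_cast
          ring_nf
        have hn3 : (n : ℝ) ^ 3 = Real.exp (3 * L) := by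
          conv_lhs => rw [← Real.exp_log hn0, ← hLdef]
          rw [← Real.exp_nat_mul]
          norm_num
        have hnum2 := numeric_bound L (m : ℝ) ε cst hL hm1R hm_real hc2 hε
        calc ((I.card : ℝ)) * ((2 : ℝ) ^ M * Real.exp (-(ε ^ 2 * (m : ℝ) ^ 2 / 4))) * (n : ℝ) ^ 3
            ≤ Real.exp (2 * (m : ℝ) * L)
                * ((2 : ℝ) ^ M * Real.exp (-(ε ^ 2 * (m : ℝ) ^ 2 / 4))) * (n : ℝ) ^ 3 := by
              have h := hIcard.trans hpow.le
              exact mul_le_mul_of_nonneg_right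
                (mul_le_mul_of_nonneg_right h (by positivity)) (by positivity)
          _ = (2 : ℝ) ^ M
                * Real.exp (2 * (m : ℝ) * L - ε ^ 2 * (m : ℝ) ^ 2 / 4 + 3 * L) := by
              rw [hn3, show 2 * (m : ℝ) * L - ε ^ 2 * (m : ℝ) ^ 2 / 4 + 3 * L
                  = (2 * (m : ℝ) * L + -(ε ^ 2 * (m : ℝ) ^ 2 / 4)) + 3 * L from by ring,
                Real.exp_add, Real.exp_add]
              ring
          _ ≤ (2 : ℝ) ^ M * Real.exp 0 := by
              refine mul_le_mul_of_nonneg_left (Real.exp_le_exp.mpr (by linarith)) (by positivity)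
          _ ≤ 2 * (2 : ℝ) ^ M := by
              rw [Real.exp_zero, mul_one]
              nlinarith [pow_pos (show (0:ℝ) < 2 by norm_num) M]
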